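/- Let ℋ and 𝒱 be finite nonempty sets of integers with 𝒱 containing a positive and a negative element (so that B(x;t) and B̄(t) have constant term 1), and let 𝔖 = ℋ × 𝒱. Then for every n ≥ 1, the coefficient of tⁿ in the formal logarithm log B(x;t) ∈ (ℚ[x,x⁻¹])[[t]] equals H(x)ⁿ · ([tⁿ] log B̄(t)), where H(x) = Σ_{h∈ℋ} x^h. -/

import Mathlib

/-- The `n`-th coefficient of the formal logarithm `log F = Σ_{k≥1} (-1)^{k-1} (F-1)^k / k`
of a power series `F` with constant term `1` (for such `F`, only the terms with
`1 ≤ k ≤ n` contribute to the coefficient of `tⁿ`). -/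
noncomputable def logCoeff {A : Type*} [CommRing A] [Algebra ℚ A]
    (F : PowerSeries A) (n : ℕ) : A :=
  ∑ k ∈ Finset.Icc 1 n, ((-1 : ℚ) ^ (k - 1) / k) • PowerSeries.coeff n ((F - 1) ^ k)

/-- The generating function `B(x;t) ∈ (ℚ[x,x⁻¹])[[t]]` of bilateral walks with steps in `S`:
the coefficient of `tⁿ` is `Σ_i b_{n,i} x^i`, where `b_{n,i}` is the number of walks of
length `n` with steps in `S` ending at `(i,0)`. -/
noncomputable def bilateralSeries (S : Finset (ℤ × ℤ)) : PowerSeries (LaurentPolynomial ℚ) :=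
  PowerSeries.mk fun n =>
    ∑ w ∈ (Fintype.piFinset fun _ : Fin n => S).filter (fun w => (∑ l, w l).2 = 0),
      LaurentPolynomial.T (∑ l, w l).1

/-- The number of bridges of length `n` with steps in `V`. -/
noncomputable def bridgeCount (V : Finset ℤ) (n : ℕ) : ℕ :=
  Nat.card {v : Fin n → ℤ // (∀ l, v l ∈ V) ∧ ∑ l, v l = 0}

/-- The generating function `B̄(t) ∈ ℚ[[t]]` of bridges with steps in `V`. -/
noncomputable def bridgeSeries (V : Finset ℤ) : PowerSeries ℚ :=
  PowerSeries.mk fun n => (bridgeCount V n : ℚ)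

/-- The step Laurent polynomial `H(x) = Σ_{h ∈ ℋ} x^h`. -/
noncomputable def stepPoly (H : Finset ℤ) : LaurentPolynomial ℚ :=
  ∑ h ∈ H, LaurentPolynomial.T h

open PowerSeries Finset in
private lemma T_sum' {ι : Type*} (s : Finset ι) (f : ι → ℤ) :
    (LaurentPolynomial.T (∑ i ∈ s, f i) : LaurentPolynomial ℚ)
      = ∏ i ∈ s, LaurentPolynomial.T (f i) := by
  classical
  induction s using Finset.induction_on with
  | empty => simp
  | insert _ _ ha ih =>
    rw [Finset.sum_insert ha, Finset.prod_insert ha, LaurentPolynomial.T_add, ih]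

private lemma bridgeCount_eq (V : Finset ℤ) (n : ℕ) :
    bridgeCount V n
      = ((Fintype.piFinset fun _ : Fin n => V).filter fun g => ∑ l, g l = 0).card := by
  classical
  rw [bridgeCount, ← Nat.card_eq_finsetCard]
  exact Nat.card_congr (Equiv.subtypeEquivRight (by
    simp [Fintype.mem_piFinset, Finset.mem_filter, and_comm]))

private lemma bilateral_eq (H V : Finset ℤ) :
    bilateralSeries (H ×ˢ V)
      = PowerSeries.rescale (stepPoly H)
          (PowerSeries.map (algebraMap ℚ (LaurentPolynomial ℚ)) (bridgeSeries V)) := by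
  classical
  apply PowerSeries.ext
  intro n
  rw [PowerSeries.coeff_rescale, PowerSeries.coeff_map, bridgeSeries, bilateralSeries,
    PowerSeries.coeff_mk, PowerSeries.coeff_mk]
  have key : ∑ w ∈ (Fintype.piFinset fun _ : Fin n => H ×ˢ V).filter
        (fun w => (∑ l, w l).2 = 0), (LaurentPolynomial.T (∑ l, w l).1 : LaurentPolynomial ℚ)
      = ∑ p ∈ (Fintype.piFinset fun _ : Fin n => H) ×ˢ
          ((Fintype.piFinset fun _ : Fin n => V).filter fun g => ∑ l, g l = 0),
          LaurentPolynomial.T (∑ l, p.1 l) := by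
    refine Finset.sum_nbij' (fun w => (fun l => (w l).1, fun l => (w l).2))
      (fun p => fun l => (p.1 l, p.2 l)) ?_ ?_ ?_ ?_ ?_
    · intro w hw
      simp only [Finset.mem_filter, Fintype.mem_piFinset, Finset.mem_product,
        Finset.mem_product, Prod.snd_sum] at hw ⊢
      exact ⟨fun l => (hw.1 l).1, fun l => (hw.1 l).2, hw.2⟩
    · intro p hp
      simp only [Finset.mem_filter, Fintype.mem_piFinset, Finset.mem_product,
        Prod.snd_sum] at hp ⊢
      exact ⟨fun l => ⟨hp.1 l, hp.2.1 l⟩, hp.2.2⟩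
    · intro w _; rfl
    · intro p _; rfl
    · intro w _; simp [Prod.fst_sum]
  have h2 : ∑ p ∈ (Fintype.piFinset fun _ : Fin n => H) ×ˢ
          ((Fintype.piFinset fun _ : Fin n => V).filter fun g => ∑ l, g l = 0),
          (LaurentPolynomial.T (∑ l, p.1 l) : LaurentPolynomial ℚ)
      = bridgeCount V n • ∑ f ∈ Fintype.piFinset fun _ : Fin n => H,
          LaurentPolynomial.T (∑ l, f l) := by
    rw [Finset.sum_product, bridgeCount_eq, Finset.smul_sum]
    refine Finset.sum_congr rfl fun f _ => ?_
    show ∑ _y ∈ _, LaurentPolynomial.T (∑ l, f l) = _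
    exact Finset.sum_const _
  have hpow : (stepPoly H) ^ n
      = ∑ f ∈ Fintype.piFinset fun _ : Fin n => H, LaurentPolynomial.T (∑ l, f l) := by
    rw [stepPoly, ← Fin.prod_const n, Finset.prod_univ_sum]
    exact Finset.sum_congr rfl fun f _ => (T_sum' _ _).symm
  rw [key, h2, ← hpow, map_natCast, nsmul_eq_mul, mul_comm]

private lemma logCoeff_rescale_map (F : PowerSeries ℚ) (a : LaurentPolynomial ℚ) (n : ℕ) :
    logCoeff (PowerSeries.rescale a (PowerSeries.map (algebraMap ℚ (LaurentPolynomial ℚ)) F)) n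
      = logCoeff F n • a ^ n := by
  unfold logCoeff
  rw [Finset.sum_smul]
  refine Finset.sum_congr rfl fun k _ => ?_
  have h1 : PowerSeries.rescale a (PowerSeries.map (algebraMap ℚ (LaurentPolynomial ℚ)) F) - 1
      = PowerSeries.rescale a (PowerSeries.map (algebraMap ℚ (LaurentPolynomial ℚ)) (F - 1)) := by
    simp [map_sub]
  rw [h1, ← map_pow, ← map_pow, PowerSeries.coeff_rescale, PowerSeries.coeff_map,
    mul_comm, ← Algebra.smul_def, smul_smul, smul_eq_mul]
/-- For `𝔖 = ℋ × 𝒱`, the coefficient of `tⁿ` in `log B(x;t)` equals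
`H(x)ⁿ · [tⁿ] log B̄(t)`. -/
theorem logCoeff_bilateral_factorises (H V : Finset ℤ) (hH : H.Nonempty) (hV : V.Nonempty)
    (hVpos : ∃ v ∈ V, 0 < v) (hVneg : ∃ v ∈ V, v < 0) :
    ∀ n : ℕ, 1 ≤ n →
      logCoeff (bilateralSeries (H ×ˢ V)) n
        = logCoeff (bridgeSeries V) n • stepPoly H ^ n := by
  intro n _
  rw [bilateral_eq, logCoeff_rescale_map]
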